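/- Fix a β-sequence [·]_β. For u ∈ 𝒫₀,₁, let (P_n^{(u)})_{n≥0} be the polynomial sequence determined by Σ_{n≥0} (1/[n]_β!) P_n^{(u)}(x) z^n = Σ_{k≥0} (1/[k]_β!) x^k u(z)^k in ℂ[x][[z]], and let W_u be the umbral operator, the ℂ-linear operator on ℂ[x] with W_u(x^n) = P_n^{(u)}. Then for all u_1, u_2 ∈ 𝒫₀,₁, the composition of umbral operators satisfies W_{u_2} ∘ W_{u_1} = W_{u_2 ∘ u_1}, where u_2 ∘ u_1 denotes the substitution of u_1 into u_2 (which again lies in 𝒫₀,₁). In particular, the umbral operators form a group isomorphic (up to order of composition) to the group (𝒫₀,₁, ∘) of formal power series under composition. -/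

import Mathlib

/-- The β-factorial `[n]_β! = ∏_{i=1}^n [i]_β`. -/
noncomputable def betaFact (β : ℕ → ℝ) (n : ℕ) : ℝ := ∏ i ∈ Finset.range n, β (i + 1)

/-- Composition (substitution) `u₂ ∘ u₁` of formal power series, for `u₁` with zero constant
term, defined coefficientwise: the `n`-th coefficient is `Σ_{k=0}^n (u₂)_k · (coeff n of u₁^k)`
(the sum may be truncated at `k = n` since `u₁` has zero constant term). -/
noncomputable def psComp (u₂ u₁ : PowerSeries ℂ) : PowerSeries ℂ :=
  PowerSeries.mk fun n =>
    ∑ k ∈ Finset.range (n + 1), PowerSeries.coeff k u₂ * PowerSeries.coeff n (u₁ ^ k)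


open Finset Polynomial

namespace Stmt19Aux

lemma coeff_pow_zero {u : PowerSeries ℂ} (hu : PowerSeries.constantCoeff u = 0)
    {k n : ℕ} (h : n < k) : PowerSeries.coeff n (u ^ k) = 0 := by
  have hd : (PowerSeries.X : PowerSeries ℂ) ^ k ∣ u ^ k :=
    pow_dvd_pow_of_dvd (PowerSeries.X_dvd_iff.mpr hu) k
  exact (PowerSeries.X_pow_dvd_iff.mp hd) n h

lemma coeff_aeval {u : PowerSeries ℂ} (hu : PowerSeries.constantCoeff u = 0)
    (p : Polynomial ℂ) (n : ℕ) :
    PowerSeries.coeff n (Polynomial.aeval u p) =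
      ∑ k ∈ range (n + 1), p.coeff k * PowerSeries.coeff n (u ^ k) := by
  set M := max (p.natDegree + 1) (n + 1) with hM
  have hdeg : p.natDegree < M := lt_of_lt_of_le (Nat.lt_succ_self _) (le_max_left _ _)
  rw [Polynomial.aeval_eq_sum_range' hdeg, map_sum]
  simp_rw [map_smul, smul_eq_mul]
  refine (Finset.sum_subset (Finset.range_subset_range.mpr (le_max_right _ _)) ?_).symm
  intro k hk hk'
  rw [Finset.mem_range] at hk hk'
  rw [coeff_pow_zero hu (by omega), mul_zero]

lemma coeff_psComp {u₁ : PowerSeries ℂ} (hu₁ : PowerSeries.constantCoeff u₁ = 0)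
    (f : PowerSeries ℂ) {n N : ℕ} (hn : n < N) :
    PowerSeries.coeff n (psComp f u₁) =
      PowerSeries.coeff n (Polynomial.aeval u₁ (PowerSeries.trunc N f)) := by
  rw [psComp, PowerSeries.coeff_mk, coeff_aeval hu₁]
  refine Finset.sum_congr rfl fun k hk => ?_
  rw [Finset.mem_range] at hk
  rw [PowerSeries.coeff_trunc, if_pos (by omega)]

lemma psComp_mul {u₁ : PowerSeries ℂ} (hu₁ : PowerSeries.constantCoeff u₁ = 0)
    (f g : PowerSeries ℂ) :
    psComp (f * g) u₁ = psComp f u₁ * psComp g u₁ := by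
  ext n
  set Pf := PowerSeries.trunc (n + 1) f with hPf
  set Pg := PowerSeries.trunc (n + 1) g with hPg
  have h1 : PowerSeries.coeff n (psComp (f * g) u₁) =
      PowerSeries.coeff n (Polynomial.aeval u₁ (Pf * Pg)) := by
    rw [psComp, PowerSeries.coeff_mk, coeff_aeval hu₁]
    refine Finset.sum_congr rfl fun k hk => ?_
    rw [Finset.mem_range] at hk
    congr 1
    rw [PowerSeries.coeff_mul, Polynomial.coeff_mul]
    refine Finset.sum_congr rfl fun ab hab => ?_
    rw [HasAntidiagonal.mem_antidiagonal] at hab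
    rw [hPf, hPg, PowerSeries.coeff_trunc, PowerSeries.coeff_trunc,
      if_pos (by omega), if_pos (by omega)]
  have h2 : PowerSeries.coeff n (psComp f u₁ * psComp g u₁) =
      PowerSeries.coeff n (Polynomial.aeval u₁ Pf * Polynomial.aeval u₁ Pg) := by
    rw [PowerSeries.coeff_mul, PowerSeries.coeff_mul]
    refine Finset.sum_congr rfl fun ab hab => ?_
    rw [HasAntidiagonal.mem_antidiagonal] at hab
    rw [coeff_psComp hu₁ f (N := n + 1) (by omega), coeff_psComp hu₁ g (N := n + 1) (by omega)]
  rw [h1, h2, map_mul]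

lemma psComp_one {u₁ : PowerSeries ℂ} :
    psComp 1 u₁ = 1 := by
  ext n
  rw [psComp, PowerSeries.coeff_mk]
  rw [Finset.sum_eq_single 0]
  · simp
  · intro k hk hk0
    rw [PowerSeries.coeff_one, if_neg hk0, zero_mul]
  · simp

lemma psComp_pow {u₁ : PowerSeries ℂ} (hu₁ : PowerSeries.constantCoeff u₁ = 0)
    (f : PowerSeries ℂ) (j : ℕ) :
    psComp (f ^ j) u₁ = (psComp f u₁) ^ j := by
  induction j with
  | zero => simpa using psComp_one
  | succ j ih => rw [pow_succ, pow_succ, psComp_mul hu₁, ih]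

end Stmt19Aux

/-- the composition of umbral operators corresponds to composition of the
parametrizing power series: `W_{u₂} ∘ W_{u₁} = W_{u₂ ∘ u₁}`, where `W_u x^n = P_n^{(u)}`
and `(P_n^{(u)})` is determined by `Σ (1/[n]_β!) P_n^{(u)}(x) zⁿ = exp_β(u(z)x)`. -/
theorem stmt_19 (β : ℕ → ℝ) (hβ0 : β 0 = 0) (hβ1 : β 1 = 1) (hβpos : ∀ n, 1 ≤ n → 0 < β n)
    (u₁ u₂ : PowerSeries ℂ)
    (hu₁0 : PowerSeries.constantCoeff u₁ = 0) (hu₁1 : PowerSeries.coeff 1 u₁ = 1)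
    (hu₂0 : PowerSeries.constantCoeff u₂ = 0) (hu₂1 : PowerSeries.coeff 1 u₂ = 1)
    (P₁ P₂ P₃ : ℕ → Polynomial ℂ)
    (hgen₁ : ∀ n : ℕ, ((betaFact β n : ℂ))⁻¹ • P₁ n =
      ∑ k ∈ Finset.range (n + 1),
        ((betaFact β k : ℂ))⁻¹ •
          (Polynomial.C (PowerSeries.coeff n (u₁ ^ k)) * Polynomial.X ^ k))
    (hgen₂ : ∀ n : ℕ, ((betaFact β n : ℂ))⁻¹ • P₂ n =
      ∑ k ∈ Finset.range (n + 1),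
        ((betaFact β k : ℂ))⁻¹ •
          (Polynomial.C (PowerSeries.coeff n (u₂ ^ k)) * Polynomial.X ^ k))
    (hgen₃ : ∀ n : ℕ, ((betaFact β n : ℂ))⁻¹ • P₃ n =
      ∑ k ∈ Finset.range (n + 1),
        ((betaFact β k : ℂ))⁻¹ •
          (Polynomial.C (PowerSeries.coeff n ((psComp u₂ u₁) ^ k)) * Polynomial.X ^ k))
    (W₁ W₂ W₃ : Module.End ℂ (Polynomial ℂ))
    (hW₁ : ∀ n : ℕ, W₁ (Polynomial.X ^ n) = P₁ n)
    (hW₂ : ∀ n : ℕ, W₂ (Polynomial.X ^ n) = P₂ n)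
    (hW₃ : ∀ n : ℕ, W₃ (Polynomial.X ^ n) = P₃ n) :
    W₂ * W₁ = W₃ := by
  have hbF : ∀ m : ℕ, (betaFact β m : ℂ) ≠ 0 := by
    intro m
    have h : betaFact β m ≠ 0 := by
      unfold betaFact
      exact ne_of_gt (Finset.prod_pos fun i _ => hβpos (i + 1) (by omega))
    exact_mod_cast h
  have key : ∀ n : ℕ, W₂ (P₁ n) = P₃ n := by
    intro n
    have hcoe : ∀ j : ℕ, PowerSeries.coeff n ((psComp u₂ u₁) ^ j) =
        ∑ k ∈ Finset.range (n + 1),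
          PowerSeries.coeff k (u₂ ^ j) * PowerSeries.coeff n (u₁ ^ k) := by
      intro j
      rw [← Stmt19Aux.psComp_pow hu₁0, psComp, PowerSeries.coeff_mk]
    have e₁ : P₁ n = (betaFact β n : ℂ) • ∑ k ∈ Finset.range (n + 1),
        ((betaFact β k : ℂ))⁻¹ •
          (Polynomial.C (PowerSeries.coeff n (u₁ ^ k)) * Polynomial.X ^ k) := by
      rw [← hgen₁ n, smul_inv_smul₀ (hbF n)]
    have e₃ : P₃ n = (betaFact β n : ℂ) • ∑ k ∈ Finset.range (n + 1),
        ((betaFact β k : ℂ))⁻¹ •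
          (Polynomial.C (PowerSeries.coeff n ((psComp u₂ u₁) ^ k)) * Polynomial.X ^ k) := by
      rw [← hgen₃ n, smul_inv_smul₀ (hbF n)]
    rw [e₁, e₃, map_smul, map_sum]
    congr 1
    have step1 : ∀ k : ℕ, W₂ (((betaFact β k : ℂ))⁻¹ •
          (Polynomial.C (PowerSeries.coeff n (u₁ ^ k)) * Polynomial.X ^ k)) =
        PowerSeries.coeff n (u₁ ^ k) • ∑ j ∈ Finset.range (k + 1),
          ((betaFact β j : ℂ))⁻¹ •
            (Polynomial.C (PowerSeries.coeff k (u₂ ^ j)) * Polynomial.X ^ j) := by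
      intro k
      rw [← hgen₂ k, ← Polynomial.smul_eq_C_mul, map_smul, map_smul, hW₂ k, smul_comm]
    simp_rw [step1]
    have step2 : ∀ k ∈ Finset.range (n + 1),
        PowerSeries.coeff n (u₁ ^ k) • ∑ j ∈ Finset.range (k + 1),
          ((betaFact β j : ℂ))⁻¹ •
            (Polynomial.C (PowerSeries.coeff k (u₂ ^ j)) * Polynomial.X ^ j) =
        ∑ j ∈ Finset.range (n + 1),
          PowerSeries.coeff n (u₁ ^ k) • (((betaFact β j : ℂ))⁻¹ •
            (Polynomial.C (PowerSeries.coeff k (u₂ ^ j)) * Polynomial.X ^ j)) := by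
      intro k hk
      rw [Finset.mem_range] at hk
      rw [Finset.smul_sum]
      refine Finset.sum_subset (Finset.range_subset_range.mpr (by omega)) ?_
      intro j hj hj'
      rw [Finset.mem_range] at hj hj'
      rw [Stmt19Aux.coeff_pow_zero hu₂0 (by omega : k < j)]
      simp
    rw [Finset.sum_congr rfl step2, Finset.sum_comm]
    refine Finset.sum_congr rfl fun j hj => ?_
    rw [hcoe j, map_sum, Finset.sum_mul, Finset.smul_sum]
    refine Finset.sum_congr rfl fun k hk => ?_
    simp only [Polynomial.smul_eq_C_mul, Polynomial.C_mul]
    ring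
  have hXn : ∀ n : ℕ, (W₂ * W₁) (Polynomial.X ^ n) = W₃ (Polynomial.X ^ n) := by
    intro n
    rw [Module.End.mul_apply, hW₁, hW₃, key]
  refine Module.Basis.ext (Polynomial.basisMonomials ℂ) fun n => ?_
  have hb : (Polynomial.basisMonomials ℂ) n = Polynomial.X ^ n := by
    simp [Polynomial.coe_basisMonomials, Polynomial.X_pow_eq_monomial]
  rw [hb]
  exact hXn n
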